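/- Let K be a field, R = K[x₁,…,x_n] a positively graded polynomial ring, H a finite-dimensional graded commutative connected K-algebra (H⁰ = K), and A = R ⊗_K H. Fix a homogeneous element x ∈ A and pairwise coprime homogeneous elements f₁,…,f_k ∈ R. If x₁,…,x_k ∈ A are homogeneous elements with x = x₁⋯x_k such that x_i − f_i⊗1 is nilpotent for each i, then the x_i are uniquely determined by x and f₁,…,f_k (i.e., if y₁,…,y_k is another such family then x_i = y_i for all i). -/

import Mathlib

open TensorProduct

variable {K H : Type*} [Field K] [CommRing H] [Algebra K H]

/-- The degree-`m` part of the total grading on `K[x₁,…,x_n] ⊗ H`, where the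
polynomial ring carries the weighted grading by `w` and `H` the grading `ℋ`. -/
noncomputable def tensorGrade {nv : ℕ} (w : Fin nv → ℕ) (ℋ : ℕ → Submodule K H) (m : ℕ) :
    Submodule K (MvPolynomial (Fin nv) K ⊗[K] H) :=
  Submodule.span K {z | ∃ i j, i + j = m ∧
    ∃ r ∈ MvPolynomial.weightedHomogeneousSubmodule K w i, ∃ h ∈ ℋ j, z = r ⊗ₜ[K] h}

set_option linter.unusedSectionVars false
set_option linter.unusedVariables false
set_option maxHeartbeats 1000000
noncomputable section Stmt8aux
open DirectSum Finset
variable (nv : ℕ) (ℋ : ℕ → Submodule K H)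

local notation "R'" => MvPolynomial (Fin nv) K
local notation "A'" => MvPolynomial (Fin nv) K ⊗[K] H

section Proj
variable [GradedAlgebra ℋ]

def projS (t : ℕ) : H →ₗ[K] ℋ t where
  toFun h := DirectSum.decompose ℋ h t
  map_add' a b := by simp [DirectSum.decompose_add]
  map_smul' c a := by
    simp only [DirectSum.decompose_smul, RingHom.id_apply]
    exact DirectSum.smul_apply c ((DirectSum.decompose ℋ) a) t

def projH (t : ℕ) : H →ₗ[K] H := (ℋ t).subtype ∘ₗ projS ℋ t

lemma projH_apply (t : ℕ) (h : H) : projH ℋ t h = (DirectSum.decompose ℋ h t : H) := rfl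
lemma projH_mem (t : ℕ) (h : H) : projH ℋ t h ∈ ℋ t := (projS ℋ t h).2
lemma projH_of_mem {t : ℕ} {h : H} (hh : h ∈ ℋ t) : projH ℋ t h = h :=
  DirectSum.decompose_of_mem_same ℋ hh
lemma projH_of_mem_ne {s t : ℕ} {h : H} (hh : h ∈ ℋ s) (hst : s ≠ t) : projH ℋ t h = 0 :=
  DirectSum.decompose_of_mem_ne ℋ hh hst
lemma projS_of_mem {t : ℕ} {h : H} (hh : h ∈ ℋ t) : projS ℋ t h = ⟨h, hh⟩ :=
  Subtype.ext (DirectSum.decompose_of_mem_same ℋ hh)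
lemma projS_of_mem_ne {s t : ℕ} {h : H} (hh : h ∈ ℋ s) (hst : s ≠ t) : projS ℋ t h = 0 :=
  Subtype.ext (by exact DirectSum.decompose_of_mem_ne ℋ hh hst)
lemma projH_one : projH ℋ 0 (1 : H) = 1 := projH_of_mem ℋ SetLike.GradedOne.one_mem

lemma projH_zero_mul (a b : H) : projH ℋ 0 (a * b) = projH ℋ 0 a * projH ℋ 0 b := by
  classical
  have h1 : projH ℋ 0 (a * b) = ((decompose ℋ a * decompose ℋ b) 0 : H) := by
    rw [projH_apply, DirectSum.decompose_mul]
  rw [h1, DirectSum.coe_mul_apply]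
  rw [Finset.sum_eq_single ((0 : ℕ), (0 : ℕ))]
  · rfl
  · rintro ⟨i, j⟩ hb hne
    simp only [Finset.mem_filter, Finset.mem_product] at hb
    exfalso; apply hne
    have := hb.2
    have hi : i = 0 := Nat.eq_zero_of_add_eq_zero_right this
    have hj : j = 0 := Nat.eq_zero_of_add_eq_zero_left this
    simp [hi, hj]
  · intro hnm
    simp only [Finset.mem_filter, Finset.mem_product, DFinsupp.mem_support_iff] at hnm
    push_neg at hnm
    rcases Classical.em (decompose ℋ a 0 = 0) with h | h
    · simp [h]
    rcases Classical.em (decompose ℋ b 0 = 0) with h' | h'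
    · simp [h']
    · exact (hnm ⟨h, h'⟩).elim


lemma exists_bound [FiniteDimensional K H] : ∃ D : ℕ, ∀ j, D < j → ∀ h ∈ ℋ j, h = 0 := by
  classical
  set b := Module.finBasis K H with hb
  refine ⟨Finset.univ.sup (fun i => ((decompose ℋ (b i)).support.sup id)), ?_⟩
  intro j hj h hh
  have h1 : projH ℋ j h = h := projH_of_mem ℋ hh
  have h2 : h = ∑ i, b.repr h i • b i := (b.sum_repr h).symm
  have h3 : ∀ i, projH ℋ j (b i) = 0 := by
    intro i
    have hns : j ∉ (decompose ℋ (b i)).support := by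
      intro hmem
      have : j ≤ Finset.univ.sup (fun i => ((decompose ℋ (b i)).support.sup id)) := by
        calc j = id j := rfl
        _ ≤ (decompose ℋ (b i)).support.sup id := Finset.le_sup hmem
        _ ≤ _ := Finset.le_sup (f := fun i => ((decompose ℋ (b i)).support.sup id)) (Finset.mem_univ i)
      omega
    have := DFinsupp.notMem_support_iff.mp hns
    rw [projH_apply, this, ZeroMemClass.coe_zero]
  rw [← h1, h2, map_sum]
  simp only [map_smul, h3, smul_zero, Finset.sum_const_zero]

def contractA (χ : H →ₗ[K] K) : A' →ₗ[K] R' :=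
  (TensorProduct.rid K (MvPolynomial (Fin nv) K)).toLinearMap ∘ₗ LinearMap.lTensor _ χ

lemma contractA_tmul (χ : H →ₗ[K] K) (r : R') (h : H) :
    contractA nv χ (r ⊗ₜ[K] h) = χ h • r := rfl

def PP (t : ℕ) : A' →ₗ[K] A' := LinearMap.lTensor _ (projH ℋ t)

lemma PP_tmul (t : ℕ) (r : R') (h : H) : PP nv ℋ t (r ⊗ₜ[K] h) = r ⊗ₜ[K] projH ℋ t h := rfl

def TT (t : ℕ) : Submodule K A' :=
  Submodule.span K {z | ∃ r : R', ∃ h ∈ ℋ t, z = r ⊗ₜ[K] h}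

def NN (t : ℕ) : Submodule K A' :=
  Submodule.span K {z | ∃ r : R', ∃ j, t ≤ j ∧ ∃ h ∈ ℋ j, z = r ⊗ₜ[K] h}

lemma PP_mem_TT (t : ℕ) (z : A') : PP nv ℋ t z ∈ TT nv ℋ t := by
  induction z using TensorProduct.induction_on with
  | zero => simp only [map_zero]; exact Submodule.zero_mem _
  | tmul r h => exact Submodule.subset_span ⟨r, projH ℋ t h, projH_mem ℋ t h, rfl⟩
  | add a b ha hb => rw [map_add]; exact Submodule.add_mem _ ha hb

lemma TT_le_NN {t j : ℕ} (h : t ≤ j) : TT nv ℋ j ≤ NN nv ℋ t := by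
  apply Submodule.span_le.mpr
  rintro z ⟨r, hh, hmem, rfl⟩
  exact Submodule.subset_span ⟨r, j, h, hh, hmem, rfl⟩

lemma sum_PP {D : ℕ} (hD : ∀ j, D < j → ∀ h ∈ ℋ j, h = 0) (z : A') :
    ∑ j ∈ Finset.range (D + 1), PP nv ℋ j z = z := by
  classical
  induction z using TensorProduct.induction_on with
  | zero => simp
  | tmul r h =>
    have : ∑ j ∈ Finset.range (D + 1), PP nv ℋ j (r ⊗ₜ[K] h)
        = r ⊗ₜ[K] (∑ j ∈ Finset.range (D + 1), projH ℋ j h) := by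
      rw [TensorProduct.tmul_sum]
      rfl
    rw [this]
    congr 1
    have hsub : (decompose ℋ h).support ⊆ Finset.range (D + 1) := by
      intro j hj
      rw [Finset.mem_range]
      by_contra hc
      have hj' : D < j := by omega
      have : (decompose ℋ h j : H) = 0 := hD j hj' _ (decompose ℋ h j).2
      rw [DFinsupp.mem_support_iff] at hj
      exact hj (Subtype.ext this)
    calc ∑ j ∈ Finset.range (D + 1), projH ℋ j h
        = ∑ j ∈ (decompose ℋ h).support, projH ℋ j h := by
          refine (Finset.sum_subset hsub ?_).symm
          intro j _ hj
          rw [projH_apply, DFinsupp.notMem_support_iff.mp hj, ZeroMemClass.coe_zero]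
      _ = h := DirectSum.sum_support_decompose ℋ h
  | add a b ha hb =>
    simp only [map_add, Finset.sum_add_distrib]
    rw [ha, hb]


lemma NN_mul {s t : ℕ} {z z' : A'} (hz : z ∈ NN nv ℋ s) (hz' : z' ∈ NN nv ℋ t) :
    z * z' ∈ NN nv ℋ (s + t) := by
  induction hz using Submodule.span_induction with
  | mem g hg =>
    induction hz' using Submodule.span_induction with
    | mem g' hg' =>
      obtain ⟨r, j, hj, h, hh, rfl⟩ := hg
      obtain ⟨r', j', hj', h', hh', rfl⟩ := hg'
      refine Submodule.subset_span ⟨r * r', j + j', by omega, h * h',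
        SetLike.mul_mem_graded hh hh', ?_⟩
      rw [Algebra.TensorProduct.tmul_mul_tmul]
    | zero => rw [mul_zero]; exact Submodule.zero_mem _
    | add a b ha hb hra hrb => rw [mul_add]; exact Submodule.add_mem _ hra hrb
    | smul c a ha hra => rw [mul_smul_comm]; exact Submodule.smul_mem _ _ hra
  | zero => rw [zero_mul]; exact Submodule.zero_mem _
  | add a b ha hb hra hrb => rw [add_mul]; exact Submodule.add_mem _ hra hrb
  | smul c a ha hra => rw [smul_mul_assoc]; exact Submodule.smul_mem _ _ hra

lemma mem_NN_of_PP {D : ℕ} (hD : ∀ j, D < j → ∀ h ∈ ℋ j, h = 0) {t : ℕ} {z : A'}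
    (h : ∀ j, j < t → PP nv ℋ j z = 0) : z ∈ NN nv ℋ t := by
  rw [← sum_PP nv ℋ hD z]
  refine Submodule.sum_mem _ ?_
  intro j _
  rcases lt_or_ge j t with hj | hj
  · rw [h j hj]; exact Submodule.zero_mem _
  · exact TT_le_NN nv ℋ hj (PP_mem_TT nv ℋ j z)

lemma NN_zero_top {D : ℕ} (hD : ∀ j, D < j → ∀ h ∈ ℋ j, h = 0) (z : A') :
    z ∈ NN nv ℋ 0 :=
  mem_NN_of_PP nv ℋ hD (fun j hj => absurd hj (Nat.not_lt_zero j))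

lemma PP_eq_zero_of_mem_NN {t j : ℕ} {z : A'} (hz : z ∈ NN nv ℋ t) (hj : j < t) :
    PP nv ℋ j z = 0 := by
  induction hz using Submodule.span_induction with
  | mem g hg =>
    obtain ⟨r, j', hj', h, hh, rfl⟩ := hg
    rw [PP_tmul, projH_of_mem_ne ℋ hh (by omega), TensorProduct.tmul_zero]
  | zero => exact map_zero _
  | add a b ha hb hra hrb => rw [map_add, hra, hrb, add_zero]
  | smul c a ha hra => rw [map_smul, hra, smul_zero]

lemma mem_NN_succ {D : ℕ} (hD : ∀ j, D < j → ∀ h ∈ ℋ j, h = 0) {t : ℕ} {z : A'}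
    (hz : z ∈ NN nv ℋ t) (h : PP nv ℋ t z = 0) : z ∈ NN nv ℋ (t + 1) := by
  refine mem_NN_of_PP nv ℋ hD ?_
  intro j hj
  rcases lt_or_ge j t with hj' | hj'
  · exact PP_eq_zero_of_mem_NN nv ℋ hz hj'
  · have : j = t := by omega
    rw [this, h]

lemma eq_zero_of_mem_NN {D : ℕ} (hD : ∀ j, D < j → ∀ h ∈ ℋ j, h = 0) {z : A'}
    (hz : z ∈ NN nv ℋ (D + 1)) : z = 0 := by
  rw [← sum_PP nv ℋ hD z]
  refine Finset.sum_eq_zero ?_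
  intro j hj
  rw [Finset.mem_range] at hj
  exact PP_eq_zero_of_mem_NN nv ℋ hz (by omega)

lemma PP_zero_mul (z w : A') : PP nv ℋ 0 (z * w) = PP nv ℋ 0 z * PP nv ℋ 0 w := by
  induction z using TensorProduct.induction_on with
  | zero => simp
  | add a b ha hb => rw [add_mul, map_add, map_add, ha, hb, add_mul]
  | tmul r h =>
    induction w using TensorProduct.induction_on with
    | zero => simp
    | add a b ha hb => rw [mul_add, map_add, map_add, ha, hb, mul_add]
    | tmul r' h' =>
      rw [Algebra.TensorProduct.tmul_mul_tmul, PP_tmul, PP_tmul, PP_tmul,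
        Algebra.TensorProduct.tmul_mul_tmul, projH_zero_mul]

lemma contractA_mul_tmul_one (χ : H →ₗ[K] K) (F : R') (z : A') :
    contractA nv χ ((F ⊗ₜ[K] (1 : H)) * z) = F * contractA nv χ z := by
  induction z using TensorProduct.induction_on with
  | zero => simp
  | add a b ha hb => rw [mul_add, map_add, ha, hb, map_add, mul_add]
  | tmul r h =>
    rw [Algebra.TensorProduct.tmul_mul_tmul, one_mul, contractA_tmul, contractA_tmul,
      mul_smul_comm]

lemma contractA_eq_zero_on_NN {t : ℕ} {χ : H →ₗ[K] K}
    (hχ : ∀ j h, t ≤ j → h ∈ ℋ j → χ h = 0) {z : A'} (hz : z ∈ NN nv ℋ t) :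
    contractA nv χ z = 0 := by
  induction hz using Submodule.span_induction with
  | mem g hg =>
    obtain ⟨r, j, hj, h, hh, rfl⟩ := hg
    rw [contractA_tmul, hχ j h hj hh, zero_smul]
  | zero => exact map_zero _
  | add a b ha hb hra hrb => rw [map_add, hra, hrb, add_zero]
  | smul c a ha hra => rw [map_smul, hra, smul_zero]


lemma TT_zero_struct (hH0 : ℋ 0 = Submodule.span K {(1 : H)}) {z : A'}
    (hz : z ∈ TT nv ℋ 0) : ∃ r : R', z = r ⊗ₜ[K] (1 : H) := by
  induction hz using Submodule.span_induction with
  | mem g hg =>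
    obtain ⟨r, h, hh, rfl⟩ := hg
    rw [hH0, Submodule.mem_span_singleton] at hh
    obtain ⟨c, rfl⟩ := hh
    exact ⟨c • r, by rw [TensorProduct.tmul_smul, TensorProduct.smul_tmul']⟩
  | zero => exact ⟨0, by rw [TensorProduct.zero_tmul]⟩
  | add a b ha hb hra hrb =>
    obtain ⟨r, rfl⟩ := hra; obtain ⟨r', rfl⟩ := hrb
    exact ⟨r + r', by rw [TensorProduct.add_tmul]⟩
  | smul c a ha hra =>
    obtain ⟨r, rfl⟩ := hra
    exact ⟨c • r, by rw [TensorProduct.smul_tmul']⟩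

/-- contraction of a pure-λ functional sees only degree `t`. -/
lemma contractA_projS_grade {w : Fin nv → ℕ} {m t : ℕ} (lam : ℋ t →ₗ[K] K) {z : A'}
    (hz : z ∈ tensorGrade w ℋ m) :
    contractA nv (lam ∘ₗ projS ℋ t) z ∈ MvPolynomial.weightedHomogeneousSubmodule K w (m - t) := by
  induction hz using Submodule.span_induction with
  | mem g hg =>
    obtain ⟨a, b, hab, r, hr, h, hh, rfl⟩ := hg
    rw [contractA_tmul]
    by_cases hbt : b = t
    · subst hbt
      have : a = m - b := by omega
      rw [← this]
      exact Submodule.smul_mem _ _ hr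
    · rw [LinearMap.comp_apply, projS_of_mem_ne ℋ hh hbt, map_zero, zero_smul]
      exact Submodule.zero_mem _
  | zero => rw [map_zero]; exact Submodule.zero_mem _
  | add a b ha hb hra hrb => rw [map_add]; exact Submodule.add_mem _ hra hrb
  | smul c a ha hra => rw [map_smul]; exact Submodule.smul_mem _ _ hra

lemma contractA_projS_grade_lt {w : Fin nv → ℕ} {m t : ℕ} (lam : ℋ t →ₗ[K] K) {z : A'}
    (hz : z ∈ tensorGrade w ℋ m) (hmt : m < t) :
    contractA nv (lam ∘ₗ projS ℋ t) z = 0 := by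
  induction hz using Submodule.span_induction with
  | mem g hg =>
    obtain ⟨a, b, hab, r, hr, h, hh, rfl⟩ := hg
    rw [contractA_tmul, LinearMap.comp_apply, projS_of_mem_ne ℋ hh (by omega), map_zero,
      zero_smul]
  | zero => exact map_zero _
  | add a b ha hb hra hrb => rw [map_add, hra, hrb, add_zero]
  | smul c a ha hra => rw [map_smul, hra, smul_zero]

lemma contractA_projS_PP (t : ℕ) (lam : ℋ t →ₗ[K] K) (z : A') :
    contractA nv (lam ∘ₗ projS ℋ t) (PP nv ℋ t z) = contractA nv (lam ∘ₗ projS ℋ t) z := by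
  induction z using TensorProduct.induction_on with
  | zero => simp
  | add a b ha hb => rw [map_add, map_add, ha, hb, map_add]
  | tmul r h =>
    have h1 : projS ℋ t (projH ℋ t h) = ⟨projH ℋ t h, projH_mem ℋ t h⟩ :=
      projS_of_mem ℋ (projH_mem ℋ t h)
    have h2 : projS ℋ t (projH ℋ t h) = projS ℋ t h := by
      apply Subtype.ext
      rw [h1]
      rfl
    rw [PP_tmul, contractA_tmul, contractA_tmul, LinearMap.comp_apply, LinearMap.comp_apply, h2]

lemma PP_eq_zero_of_contract [FiniteDimensional K H] (t : ℕ) {z : A'}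
    (hz : ∀ lam : ℋ t →ₗ[K] K, contractA nv (lam ∘ₗ projS ℋ t) z = 0) :
    PP nv ℋ t z = 0 := by
  classical
  have hmem := PP_mem_TT nv ℋ t z
  set b := Module.finBasis K (ℋ t) with hbdef
  -- representation of elements of TT t over the basis b
  have hrep : ∀ z' ∈ TT nv ℋ t, ∃ c : Fin (Module.finrank K (ℋ t)) → R',
      z' = ∑ β, (c β) ⊗ₜ[K] ((b β : H)) := by
    intro z' hz'
    induction hz' using Submodule.span_induction with
    | mem g hg =>
      obtain ⟨r, h, hh, rfl⟩ := hg
      refine ⟨fun β => (b.repr ⟨h, hh⟩) β • r, ?_⟩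
      have hsum : h = ∑ β, ((b.repr ⟨h, hh⟩) β) • ((b β : H)) := by
        have h2 := congrArg (Submodule.subtype (ℋ t)) (b.sum_repr ⟨h, hh⟩)
        simp only [map_sum, map_smul, Submodule.subtype_apply] at h2; exact h2.symm
      calc r ⊗ₜ[K] h = r ⊗ₜ[K] (∑ β, ((b.repr ⟨h, hh⟩) β) • ((b β : H))) := by rw [← hsum]
      _ = ∑ β, ((b.repr ⟨h, hh⟩) β • r) ⊗ₜ[K] ((b β : H)) := by
          rw [TensorProduct.tmul_sum]
          exact Finset.sum_congr rfl (fun β _ => by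
            rw [TensorProduct.tmul_smul, TensorProduct.smul_tmul'])
    | zero => exact ⟨0, by simp⟩
    | add a b' ha hb' hra hrb' =>
      obtain ⟨c, rfl⟩ := hra; obtain ⟨c', rfl⟩ := hrb'
      refine ⟨c + c', ?_⟩
      rw [← Finset.sum_add_distrib]
      exact Finset.sum_congr rfl (fun β _ => by
        simp [TensorProduct.add_tmul])
    | smul k a ha hra =>
      obtain ⟨c, rfl⟩ := hra
      refine ⟨k • c, ?_⟩
      rw [Finset.smul_sum]
      exact Finset.sum_congr rfl (fun β _ => by
        simp [TensorProduct.smul_tmul'])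
  obtain ⟨c, hc⟩ := hrep _ hmem
  have hcoef : ∀ β, c β = 0 := by
    intro β
    have h1 := hz (b.coord β)
    rw [← contractA_projS_PP nv ℋ t (b.coord β) z, hc, map_sum] at h1
    have h2 : ∀ γ, contractA nv ((b.coord β) ∘ₗ projS ℋ t) ((c γ) ⊗ₜ[K] ((b γ : H)))
        = (if γ = β then (1:K) else 0) • c γ := by
      intro γ
      rw [contractA_tmul, LinearMap.comp_apply]
      congr 1
      rw [projS_of_mem ℋ (b γ).2]
      have : (⟨((b γ : H)), (b γ).2⟩ : ℋ t) = b γ := rfl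
      rw [this, Module.Basis.coord_apply, Module.Basis.repr_self]
      exact Finsupp.single_apply
    rw [Finset.sum_congr rfl (fun γ _ => h2 γ)] at h1
    simpa using h1
  rw [hc]
  refine Finset.sum_eq_zero (fun β _ => ?_)
  rw [hcoef, TensorProduct.zero_tmul]


def lam0 (hH0 : ℋ 0 = Submodule.span K {(1 : H)}) (h1 : (1 : H) ≠ 0) : ℋ 0 →ₗ[K] K :=
  (LinearEquiv.toSpanNonzeroSingleton K H 1 h1).symm.toLinearMap ∘ₗ
    (LinearEquiv.ofEq _ _ hH0).toLinearMap

lemma lam0_one (hH0 : ℋ 0 = Submodule.span K {(1 : H)}) (h1 : (1 : H) ≠ 0) :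
    lam0 ℋ hH0 h1 ⟨1, SetLike.GradedOne.one_mem⟩ = 1 := by
  have : (LinearEquiv.ofEq _ _ hH0) ⟨1, SetLike.GradedOne.one_mem⟩
      = LinearEquiv.toSpanNonzeroSingleton K H 1 h1 1 := by
    apply Subtype.ext
    simp [LinearEquiv.ofEq]
    rfl
  unfold lam0
  rw [LinearMap.comp_apply]
  simp only [LinearEquiv.coe_coe]
  rw [this, LinearEquiv.symm_apply_apply]

lemma chi0_one (hH0 : ℋ 0 = Submodule.span K {(1 : H)}) (h1 : (1 : H) ≠ 0) :
    ((lam0 ℋ hH0 h1) ∘ₗ projS ℋ 0) (1 : H) = 1 := by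
  rw [LinearMap.comp_apply, projS_of_mem ℋ SetLike.GradedOne.one_mem, lam0_one]

lemma contractA_chi0_tmul_one (hH0 : ℋ 0 = Submodule.span K {(1 : H)}) (h1 : (1 : H) ≠ 0)
    (r : R') : contractA nv ((lam0 ℋ hH0 h1) ∘ₗ projS ℋ 0) (r ⊗ₜ[K] (1 : H)) = r := by
  rw [contractA_tmul, chi0_one, one_smul]

lemma PP_zero_pow (z : A') : ∀ m : ℕ, 1 ≤ m → PP nv ℋ 0 (z ^ m) = (PP nv ℋ 0 z) ^ m := by
  intro m
  induction m with
  | zero => omega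
  | succ n ih =>
    intro _
    rcases Nat.eq_zero_or_pos n with h | h
    · subst h; rw [pow_one, pow_one]
    · have hn : 1 ≤ n := h
      rw [pow_succ, pow_succ, PP_zero_mul, ih hn]

lemma nilpotent_mem_NN_one {D : ℕ} (hD : ∀ j, D < j → ∀ h ∈ ℋ j, h = 0)
    (hH0 : ℋ 0 = Submodule.span K {(1 : H)}) (h1 : (1 : H) ≠ 0) {z : A'}
    (hz : IsNilpotent z) : z ∈ NN nv ℋ 1 := by
  obtain ⟨m, hm⟩ := hz
  have hm0 : m ≠ 0 := by
    rintro rfl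
    rw [pow_zero] at hm
    have h2 := congrArg (contractA nv ((lam0 ℋ hH0 h1) ∘ₗ projS ℋ 0)) hm
    rw [Algebra.TensorProduct.one_def, contractA_chi0_tmul_one, map_zero] at h2
    exact one_ne_zero h2
  obtain ⟨ρ, hρ⟩ := TT_zero_struct nv ℋ hH0 (PP_mem_TT nv ℋ 0 z)
  have h3 : (PP nv ℋ 0 z) ^ m = 0 := by
    rw [← PP_zero_pow nv ℋ z m (Nat.one_le_iff_ne_zero.mpr hm0), hm, map_zero]
  rw [hρ, Algebra.TensorProduct.tmul_pow, one_pow] at h3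
  have h4 := congrArg (contractA nv ((lam0 ℋ hH0 h1) ∘ₗ projS ℋ 0)) h3
  rw [contractA_chi0_tmul_one, map_zero] at h4
  have h5 : ρ = 0 := pow_eq_zero_iff hm0 |>.mp h4
  have h6 : PP nv ℋ 0 z = 0 := by rw [hρ, h5, TensorProduct.zero_tmul]
  exact mem_NN_of_PP nv ℋ hD (fun j hj => by interval_cases j; exact h6)

lemma prod_sub_tmul_mem {D : ℕ} (hD : ∀ j, D < j → ∀ h ∈ ℋ j, h = 0) {k : ℕ}
    (f : Fin k → R') (y : Fin k → A') (s : Finset (Fin k))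
    (hy : ∀ i ∈ s, y i - (f i) ⊗ₜ[K] (1 : H) ∈ NN nv ℋ 1) :
    (∏ i ∈ s, y i) - (∏ i ∈ s, f i) ⊗ₜ[K] (1 : H) ∈ NN nv ℋ 1 := by
  classical
  induction s using Finset.induction_on with
  | empty =>
    simp only [Finset.prod_empty, ← Algebra.TensorProduct.one_def, sub_self]
    exact Submodule.zero_mem _
  | insert a s' ha ih =>
    rw [Finset.prod_insert ha, Finset.prod_insert ha]
    have h1 : (f a * ∏ i ∈ s', f i) ⊗ₜ[K] (1:H)
        = ((f a) ⊗ₜ[K] (1:H)) * ((∏ i ∈ s', f i) ⊗ₜ[K] (1:H)) := by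
      rw [Algebra.TensorProduct.tmul_mul_tmul, mul_one]
    have hid : y a * (∏ i ∈ s', y i) - (f a * ∏ i ∈ s', f i) ⊗ₜ[K] (1:H)
        = y a * ((∏ i ∈ s', y i) - (∏ i ∈ s', f i) ⊗ₜ[K] (1:H))
          + ((∏ i ∈ s', f i) ⊗ₜ[K] (1:H)) * (y a - (f a) ⊗ₜ[K] (1:H)) := by
      rw [h1]; ring
    rw [hid]
    refine Submodule.add_mem _ ?_ ?_
    · have := NN_mul nv ℋ (NN_zero_top nv ℋ hD (y a))
        (ih (fun i hi => hy i (Finset.mem_insert_of_mem hi)))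
      rwa [Nat.zero_add] at this
    · have := NN_mul nv ℋ (NN_zero_top nv ℋ hD ((∏ i ∈ s', f i) ⊗ₜ[K] (1:H)))
        (hy a (Finset.mem_insert_self a s'))
      rwa [Nat.zero_add] at this


lemma prod_sub_prod_mem {D : ℕ} (hD : ∀ j, D < j → ∀ h ∈ ℋ j, h = 0) {k : ℕ}
    (f : Fin k → R') (x y : Fin k → A') {t : ℕ} (s : Finset (Fin k))
    (hx1 : ∀ i ∈ s, x i - (f i) ⊗ₜ[K] (1 : H) ∈ NN nv ℋ 1)
    (hy1 : ∀ i ∈ s, y i - (f i) ⊗ₜ[K] (1 : H) ∈ NN nv ℋ 1)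
    (he : ∀ i ∈ s, x i - y i ∈ NN nv ℋ t) :
    (∏ i ∈ s, x i) - (∏ i ∈ s, y i)
      - ∑ i ∈ s, ((∏ j ∈ s.erase i, f j) ⊗ₜ[K] (1 : H)) * (x i - y i) ∈ NN nv ℋ (t + 1) := by
  classical
  induction s using Finset.induction_on with
  | empty =>
    simp only [Finset.prod_empty, Finset.sum_empty, sub_self, sub_zero]
    exact Submodule.zero_mem _
  | insert a s' ha ih =>
    have hSig : (∑ i ∈ s', ((∏ j ∈ s'.erase i, f j) ⊗ₜ[K] (1:H)) * (x i - y i)) ∈ NN nv ℋ t := by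
      refine Submodule.sum_mem _ (fun i hi => ?_)
      have := NN_mul nv ℋ
        (NN_zero_top nv ℋ hD ((∏ j ∈ s'.erase i, f j) ⊗ₜ[K] (1:H))) (he i (Finset.mem_insert_of_mem hi))
      rwa [Nat.zero_add] at this
    have hn : (∏ i ∈ s', x i) - (∏ i ∈ s', y i)
        - ∑ i ∈ s', ((∏ j ∈ s'.erase i, f j) ⊗ₜ[K] (1:H)) * (x i - y i) ∈ NN nv ℋ (t+1) :=
      ih (fun i hi => hx1 i (Finset.mem_insert_of_mem hi))
        (fun i hi => hy1 i (Finset.mem_insert_of_mem hi))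
        (fun i hi => he i (Finset.mem_insert_of_mem hi))
    have hm : (∏ i ∈ s', y i) - (∏ i ∈ s', f i) ⊗ₜ[K] (1:H) ∈ NN nv ℋ 1 :=
      prod_sub_tmul_mem nv ℋ hD f y s' (fun i hi => hy1 i (Finset.mem_insert_of_mem hi))
    have hp : x a - (f a) ⊗ₜ[K] (1:H) ∈ NN nv ℋ 1 := hx1 a (Finset.mem_insert_self a s')
    have hea : x a - y a ∈ NN nv ℋ t := he a (Finset.mem_insert_self a s')
    have hsum : ∑ i ∈ insert a s', ((∏ j ∈ (insert a s').erase i, f j) ⊗ₜ[K] (1:H)) * (x i - y i)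
        = ((∏ j ∈ s', f j) ⊗ₜ[K] (1:H)) * (x a - y a)
          + ((f a) ⊗ₜ[K] (1:H)) * ∑ i ∈ s', ((∏ j ∈ s'.erase i, f j) ⊗ₜ[K] (1:H)) * (x i - y i) := by
      rw [Finset.sum_insert ha, Finset.erase_insert ha]
      congr 1
      rw [Finset.mul_sum]
      refine Finset.sum_congr rfl (fun i hi => ?_)
      have hne : a ≠ i := fun hc => ha (hc ▸ hi)
      rw [Finset.erase_insert_of_ne hne, Finset.prod_insert (fun hc => ha (Finset.mem_of_mem_erase hc))]
      rw [show (f a * ∏ j ∈ s'.erase i, f j) ⊗ₜ[K] (1:H)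
        = ((f a) ⊗ₜ[K] (1:H)) * ((∏ j ∈ s'.erase i, f j) ⊗ₜ[K] (1:H)) by
          rw [Algebra.TensorProduct.tmul_mul_tmul, mul_one]]
      rw [mul_assoc]
    rw [Finset.prod_insert ha, Finset.prod_insert ha, hsum]
    have hid : x a * (∏ i ∈ s', x i) - y a * (∏ i ∈ s', y i)
        - (((∏ j ∈ s', f j) ⊗ₜ[K] (1:H)) * (x a - y a)
          + ((f a) ⊗ₜ[K] (1:H)) * ∑ i ∈ s', ((∏ j ∈ s'.erase i, f j) ⊗ₜ[K] (1:H)) * (x i - y i))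
        = (x a - (f a) ⊗ₜ[K] (1:H)) * (∑ i ∈ s', ((∏ j ∈ s'.erase i, f j) ⊗ₜ[K] (1:H)) * (x i - y i))
          + x a * ((∏ i ∈ s', x i) - (∏ i ∈ s', y i)
              - ∑ i ∈ s', ((∏ j ∈ s'.erase i, f j) ⊗ₜ[K] (1:H)) * (x i - y i))
          + (x a - y a) * ((∏ i ∈ s', y i) - (∏ i ∈ s', f i) ⊗ₜ[K] (1:H)) := by
      ring
    rw [hid]
    refine Submodule.add_mem _ (Submodule.add_mem _ ?_ ?_) ?_
    · have := NN_mul nv ℋ hp hSig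
      rwa [Nat.add_comm 1 t] at this
    · have := NN_mul nv ℋ (NN_zero_top nv ℋ hD (x a)) hn
      rwa [Nat.zero_add] at this
    · exact NN_mul nv ℋ hea hm

end Proj

lemma dvd_degree_le {K2 : Type*} [Field K2] {nv2 : ℕ} {w : Fin nv2 → ℕ}
    {f g : MvPolynomial (Fin nv2) K2} {d d' : ℕ}
    (hf : MvPolynomial.IsWeightedHomogeneous w f d)
    (hg : MvPolynomial.IsWeightedHomogeneous w g d') (hg0 : g ≠ 0) (hdvd : f ∣ g) : d ≤ d' := by
  classical
  obtain ⟨q, rfl⟩ := hdvd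
  obtain ⟨m, hm⟩ : ∃ m, m ∈ (f * q).support := by
    by_contra hc
    push_neg at hc
    exact hg0 (MvPolynomial.support_eq_empty.mp (Finset.eq_empty_of_forall_notMem hc))
  have hmem := MvPolynomial.support_mul f q hm
  rw [Finset.mem_add] at hmem
  obtain ⟨a, hafs, b, hbqs, rfl⟩ := hmem
  have h1 : Finsupp.weight w a = d := hf (MvPolynomial.mem_support_iff.mp hafs)
  have h2 : Finsupp.weight w (a + b) = d' := hg (MvPolynomial.mem_support_iff.mp hm)
  rw [map_add, h1] at h2
  omega

end Stmt8aux


/-- Uniqueness of product decompositions in `A = K[x₁,…,x_n] ⊗ H`: if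
`x = x₁⋯x_k = y₁⋯y_k` with all factors homogeneous and `x_i - f_i⊗1`, `y_i - f_i⊗1`
nilpotent for pairwise coprime homogeneous `f_i`, then `x_i = y_i` for all `i`. -/
theorem stmt_8 {nv : ℕ} (w : Fin nv → ℕ) (hw : ∀ i, 0 < w i)
    (ℋ : ℕ → Submodule K H) [GradedAlgebra ℋ]
    (hH0 : ℋ 0 = Submodule.span K {(1 : H)}) [FiniteDimensional K H]
    (k : ℕ) (f : Fin k → MvPolynomial (Fin nv) K) (df : Fin k → ℕ)
    (hf : ∀ i, f i ∈ MvPolynomial.weightedHomogeneousSubmodule K w (df i))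
    (hcop : ∀ i j, i ≠ j → IsRelPrime (f i) (f j))
    (x : MvPolynomial (Fin nv) K ⊗[K] H) (hx : ∃ m, x ∈ tensorGrade w ℋ m)
    (xs ys : Fin k → MvPolynomial (Fin nv) K ⊗[K] H)
    (hxs : ∀ i, ∃ m, xs i ∈ tensorGrade w ℋ m)
    (hys : ∀ i, ∃ m, ys i ∈ tensorGrade w ℋ m)
    (hxprod : x = ∏ i, xs i) (hyprod : x = ∏ i, ys i)
    (hnx : ∀ i, IsNilpotent (xs i - (f i) ⊗ₜ[K] (1 : H)))
    (hny : ∀ i, IsNilpotent (ys i - (f i) ⊗ₜ[K] (1 : H))) :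
    ∀ i, xs i = ys i := by
  classical
  by_cases h1 : (1 : H) = 0
  · have hsub : ∀ z : MvPolynomial (Fin nv) K ⊗[K] H, z = 0 := by
      intro z
      induction z using TensorProduct.induction_on with
      | zero => rfl
      | tmul r h =>
        rw [show h = 0 from by rw [← mul_one h, h1, mul_zero], TensorProduct.tmul_zero]
      | add a b ha hb => rw [ha, hb, add_zero]
    intro i; rw [hsub (xs i), hsub (ys i)]
  obtain ⟨D, hD⟩ := exists_bound ℋ
  have hvan1 : ∀ (tt : ℕ) (lam : ℋ tt →ₗ[K] K), ∀ (s : ℕ) (h : H), tt + 1 ≤ s → h ∈ ℋ s →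
      (lam ∘ₗ projS ℋ tt) h = 0 := by
    intro tt lam s h hs hh
    rw [LinearMap.comp_apply, projS_of_mem_ne ℋ hh (by omega), map_zero]
  have hn1 : ∀ i, xs i - (f i) ⊗ₜ[K] (1:H) ∈ NN nv ℋ 1 :=
    fun i => nilpotent_mem_NN_one nv ℋ hD hH0 h1 (hnx i)
  have hm1 : ∀ i, ys i - (f i) ⊗ₜ[K] (1:H) ∈ NN nv ℋ 1 :=
    fun i => nilpotent_mem_NN_one nv ℋ hD hH0 h1 (hny i)
  have hcon0 : ∀ (z : MvPolynomial (Fin nv) K ⊗[K] H) (r : MvPolynomial (Fin nv) K),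
      z - r ⊗ₜ[K] (1:H) ∈ NN nv ℋ 1 →
      contractA nv ((lam0 ℋ hH0 h1) ∘ₗ projS ℋ 0) z = r := by
    intro z r hz
    have hzz : z = r ⊗ₜ[K] (1:H) + (z - r ⊗ₜ[K] (1:H)) := by ring
    rw [hzz, map_add, contractA_chi0_tmul_one,
      contractA_eq_zero_on_NN nv ℋ (hvan1 0 (lam0 ℋ hH0 h1)) hz, add_zero]
  -- degree pinning for nonzero f i
  have hpin : ∀ (z : MvPolynomial (Fin nv) K ⊗[K] H) i, (∃ m, z ∈ tensorGrade w ℋ m) →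
      z - (f i) ⊗ₜ[K] (1:H) ∈ NN nv ℋ 1 → f i ≠ 0 → z ∈ tensorGrade w ℋ (df i) := by
    intro z i hzg hz hfne
    obtain ⟨m, hm⟩ := hzg
    have hfm : MvPolynomial.IsWeightedHomogeneous w (f i) m := by
      have h2 := contractA_projS_grade nv ℋ (lam0 ℋ hH0 h1) hm
      rw [hcon0 z (f i) hz] at h2
      rw [Nat.sub_zero] at h2
      exact MvPolynomial.mem_weightedHomogeneousSubmodule K w m (f i) |>.mp h2
    have hmd : m = df i :=
      MvPolynomial.IsWeightedHomogeneous.inj_right hfne hfm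
        ((MvPolynomial.mem_weightedHomogeneousSubmodule K w (df i) (f i)).mp (hf i))
    rwa [hmd] at hm
  by_cases hzero : ∀ i, f i ≠ 0
  · -- Case A
    have hxg : ∀ i, xs i ∈ tensorGrade w ℋ (df i) :=
      fun i => hpin (xs i) i (hxs i) (hn1 i) (hzero i)
    have hyg : ∀ i, ys i ∈ tensorGrade w ℋ (df i) :=
      fun i => hpin (ys i) i (hys i) (hm1 i) (hzero i)
    have heg : ∀ i, xs i - ys i ∈ tensorGrade w ℋ (df i) :=
      fun i => Submodule.sub_mem _ (hxg i) (hyg i)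
    have he1 : ∀ i, xs i - ys i ∈ NN nv ℋ 1 := by
      intro i
      have h2 := Submodule.sub_mem _ (hn1 i) (hm1 i)
      rwa [sub_sub_sub_cancel_right] at h2
    have key : ∀ t, 1 ≤ t → ∀ i, xs i - ys i ∈ NN nv ℋ t := by
      intro t ht
      induction t, ht using Nat.le_induction with
      | base => exact he1
      | succ t ht ih =>
        have hrel : ∑ i, ((∏ j ∈ Finset.univ.erase i, f j) ⊗ₜ[K] (1:H)) * (xs i - ys i)
            ∈ NN nv ℋ (t + 1) := by
          have h0 : (∏ i, xs i) - (∏ i, ys i) = 0 := by rw [← hxprod, ← hyprod, sub_self]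
          have h2 := prod_sub_prod_mem nv ℋ hD f xs ys Finset.univ
            (fun i _ => hn1 i) (fun i _ => hm1 i) (fun i _ => ih i)
          rw [h0, zero_sub] at h2
          have h3 := Submodule.neg_mem _ h2
          rwa [neg_neg] at h3
        intro i
        have hPt : PP nv ℋ t (xs i - ys i) = 0 := by
          apply PP_eq_zero_of_contract
          intro lam
          set g : Fin k → MvPolynomial (Fin nv) K :=
            fun j => contractA nv (lam ∘ₗ projS ℋ t) (xs j - ys j) with hgdef
          show g i = 0
          have hsum0 : ∑ j, (∏ l ∈ Finset.univ.erase j, f l) * g j = 0 := by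
            have h2 := contractA_eq_zero_on_NN nv ℋ (hvan1 t lam) hrel
            rw [map_sum] at h2
            rw [← h2]
            exact Finset.sum_congr rfl
              (fun j _ => (contractA_mul_tmul_one nv (lam ∘ₗ projS ℋ t) _ _).symm)
          have hgdeg : ∀ j, MvPolynomial.IsWeightedHomogeneous w (g j) (df j - t) := by
            intro j
            exact (MvPolynomial.mem_weightedHomogeneousSubmodule K w _ _).mp
              (contractA_projS_grade nv ℋ lam (heg j))
          by_cases hdfi : df i < t
          · exact contractA_projS_grade_lt nv ℋ lam (heg i) hdfi
          · by_contra hgne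
            have hdvd : f i ∣ (∏ l ∈ Finset.univ.erase i, f l) * g i := by
              have h4 : (∏ l ∈ Finset.univ.erase i, f l) * g i
                  = - ∑ j ∈ Finset.univ.erase i, (∏ l ∈ Finset.univ.erase j, f l) * g j := by
                have := Finset.add_sum_erase Finset.univ
                  (fun j => (∏ l ∈ Finset.univ.erase j, f l) * g j) (Finset.mem_univ i)
                rw [hsum0] at this
                linear_combination this
              rw [h4, dvd_neg]
              refine Finset.dvd_sum (fun j hj => ?_)
              have hij : i ≠ j := (Finset.ne_of_mem_erase hj).symm
              exact Dvd.dvd.mul_right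
                (Finset.dvd_prod_of_mem f (Finset.mem_erase.mpr ⟨hij, Finset.mem_univ i⟩)) _
            have hrp : IsRelPrime (f i) (∏ l ∈ Finset.univ.erase i, f l) :=
              IsRelPrime.prod_right
                (fun j hj => hcop i j (Finset.ne_of_mem_erase hj).symm)
            have hdvd2 : f i ∣ g i := by
              rw [mul_comm] at hdvd
              exact hrp.dvd_of_dvd_mul_right hdvd
            have hle : df i ≤ df i - t :=
              dvd_degree_le
                ((MvPolynomial.mem_weightedHomogeneousSubmodule K w (df i) (f i)).mp (hf i))
                (hgdeg i) hgne hdvd2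
            omega
        exact mem_NN_succ nv ℋ hD (ih i) hPt
    intro i
    have h2 := eq_zero_of_mem_NN nv ℋ hD (key (D + 1) (by omega) i)
    exact sub_eq_zero.mp h2
  · -- Case B: some f i = 0
    push_neg at hzero
    obtain ⟨i0, hi0⟩ := hzero
    have hunit : ∀ j, j ≠ i0 → IsUnit (f j) := by
      intro j hj
      have h2 := hcop i0 j (Ne.symm hj)
      rw [hi0] at h2
      exact isRelPrime_zero_left.mp h2
    have heq : ∀ (z : MvPolynomial (Fin nv) K ⊗[K] H) j, j ≠ i0 →
        (∃ m, z ∈ tensorGrade w ℋ m) → z - (f j) ⊗ₜ[K] (1:H) ∈ NN nv ℋ 1 →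
        z = (f j) ⊗ₜ[K] (1:H) := by
      intro z j hj hzg hz1
      have hfj0 : f j ≠ 0 := (hunit j hj).ne_zero
      have hdfj : df j = 0 := by
        have h2 := dvd_degree_le
          ((MvPolynomial.mem_weightedHomogeneousSubmodule K w (df j) (f j)).mp (hf j))
          (MvPolynomial.isWeightedHomogeneous_one K w) one_ne_zero ((hunit j hj).dvd)
        omega
      have hzg0 : z ∈ tensorGrade w ℋ 0 := by
        have := hpin z j hzg hz1 hfj0
        rwa [hdfj] at this
      rw [← sum_PP nv ℋ hD z]
      have hP0 : PP nv ℋ 0 z = (f j) ⊗ₜ[K] (1:H) := by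
        have hzz : z = (f j) ⊗ₜ[K] (1:H) + (z - (f j) ⊗ₜ[K] (1:H)) := by ring
        rw [hzz, map_add, PP_eq_zero_of_mem_NN nv ℋ hz1 (by omega), add_zero, PP_tmul,
          projH_one]
      have hPt : ∀ t, 0 < t → PP nv ℋ t z = 0 := by
        intro t ht
        apply PP_eq_zero_of_contract
        intro lam
        exact contractA_projS_grade_lt nv ℋ lam hzg0 ht
      rw [Finset.sum_eq_single 0]
      · exact hP0
      · intro b _ hb
        exact hPt b (Nat.pos_of_ne_zero hb)
      · intro hno
        exact absurd (Finset.mem_range.mpr (by omega)) hno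
    have hprods : ∀ j ∈ Finset.univ.erase i0, xs j = (f j) ⊗ₜ[K] (1:H) :=
      fun j hj => heq (xs j) j (Finset.ne_of_mem_erase hj) (hxs j) (hn1 j)
    have hprods' : ∀ j ∈ Finset.univ.erase i0, ys j = (f j) ⊗ₜ[K] (1:H) :=
      fun j hj => heq (ys j) j (Finset.ne_of_mem_erase hj) (hys j) (hm1 j)
    set incl : MvPolynomial (Fin nv) K →ₐ[K] MvPolynomial (Fin nv) K ⊗[K] H :=
      Algebra.TensorProduct.includeLeft with hincl
    have hFtmul : ∏ j ∈ Finset.univ.erase i0, ((f j) ⊗ₜ[K] (1:H))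
        = (∏ j ∈ Finset.univ.erase i0, f j) ⊗ₜ[K] (1:H) := by
      calc ∏ j ∈ Finset.univ.erase i0, ((f j) ⊗ₜ[K] (1:H))
          = ∏ j ∈ Finset.univ.erase i0, incl (f j) := by
            refine Finset.prod_congr rfl (fun j _ => ?_)
            rw [hincl, Algebra.TensorProduct.includeLeft_apply]
        _ = incl (∏ j ∈ Finset.univ.erase i0, f j) :=
            (map_prod incl f (Finset.univ.erase i0)).symm
        _ = (∏ j ∈ Finset.univ.erase i0, f j) ⊗ₜ[K] (1:H) := by
            rw [hincl, Algebra.TensorProduct.includeLeft_apply]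
    have hxprod' : x = xs i0 * ((∏ j ∈ Finset.univ.erase i0, f j) ⊗ₜ[K] (1:H)) := by
      rw [hxprod, ← Finset.mul_prod_erase Finset.univ xs (Finset.mem_univ i0),
        Finset.prod_congr rfl hprods, hFtmul]
    have hyprod' : x = ys i0 * ((∏ j ∈ Finset.univ.erase i0, f j) ⊗ₜ[K] (1:H)) := by
      rw [hyprod, ← Finset.mul_prod_erase Finset.univ ys (Finset.mem_univ i0),
        Finset.prod_congr rfl hprods', hFtmul]
    have hu : IsUnit ((∏ j ∈ Finset.univ.erase i0, f j) ⊗ₜ[K] (1:H)) := by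
      have h2 : IsUnit (∏ j ∈ Finset.univ.erase i0, f j) :=
        Finset.prod_induction f IsUnit (fun a b ha hb => ha.mul hb) isUnit_one
          (fun j hj => hunit j (Finset.ne_of_mem_erase hj))
      have h3 := h2.map incl
      rwa [hincl, Algebra.TensorProduct.includeLeft_apply] at h3
    intro i
    by_cases hii : i = i0
    · subst hii
      exact hu.mul_right_cancel (hxprod' ▸ hyprod' ▸ rfl : xs i * _ = ys i * _)
    · rw [hprods i (Finset.mem_erase.mpr ⟨hii, Finset.mem_univ i⟩),
        hprods' i (Finset.mem_erase.mpr ⟨hii, Finset.mem_univ i⟩)]
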